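/- Fix α ∈ (0,2) and ρ ∈ (0,1], set τ₁ = 4 + α − αρ and τ₂ = α(2 − α)ρ, and let β satisfy 0 < β < (√(τ₁² + 12τ₂) − τ₁)/6. Let x^{(0)} = x^{(1)} ∈ range(Aᴴ) and for k ≥ 1 define the mFDBK iterate x^{(k+1)} = x^{(k)} + α·(η_kᴴ(b − A x^{(k)})/‖Aᴴ η_k‖₂²)·Aᴴ η_k + β·(x^{(k)} − x^{(k−1)}), where η_k = η(x^{(k)}). Assume that for every k ≥ 1 with b − A x^{(k)} ≠ 0 one has ((1/2)·‖A‖_F²/‖A_{Û(x^{(k)}),:}‖_F² + 1/2)·(‖A_{U(x^{(k)}),:}‖_F²/‖A‖_F²)·(σ_r(A)²/σ₁(A_{U(x^{(k)}),:})²) ≥ ρ. Then, with γ₁ = (1 + 3β + β²) + (α² − 2α − αβ)ρ, γ₂ = 2β² + (1+α)β, p = (√(γ₁² + 4γ₂) − γ₁)/2 and q = (√(γ₁² + 4γ₂) + γ₁)/2, one has q < 1 and ‖x^{(k+1)} − x_*‖₂² ≤ q^k·(1 + p)·‖x^{(0)} − x_*‖₂² for every k ≥ 0. -/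

import Mathlib

open Matrix Finset

noncomputable section

/-- Squared Euclidean norm `‖v‖₂²` of a complex vector. -/
def vecNormSq {k : ℕ} (v : Fin k → ℂ) : ℝ := ∑ i, ‖v i‖ ^ 2

variable {m n : ℕ}

/-- Squared Euclidean norm `‖A_{i,:}‖₂²` of the `i`-th row of `A`. -/
def rowNormSq (A : Matrix (Fin m) (Fin n) ℂ) (i : Fin m) : ℝ := ∑ j, ‖A i j‖ ^ 2

/-- Squared Frobenius norm `‖A‖_F²`. -/
def frobSq (A : Matrix (Fin m) (Fin n) ℂ) : ℝ := ∑ i, ∑ j, ‖A i j‖ ^ 2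

/-- `ψ_i(x) = |b_i − A_{i,:} x|² / ‖A_{i,:}‖₂²`. -/
def psi (A : Matrix (Fin m) (Fin n) ℂ) (b : Fin m → ℂ) (x : Fin n → ℂ) (i : Fin m) : ℝ :=
  ‖b i - A.mulVec x i‖ ^ 2 / rowNormSq A i

/-- `max_{i ∈ [m]} ψ_i(x)`. -/
def psiMax (A : Matrix (Fin m) (Fin n) ℂ) (b : Fin m → ℂ) (x : Fin n → ℂ) : ℝ :=
  ⨆ i, psi A b x i

/-- The row submatrix `A_{S,:}` of `A`, realized by replacing the rows outside `S` with zero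
(which changes neither the Frobenius norm nor the largest singular value). -/
def rowSub (A : Matrix (Fin m) (Fin n) ℂ) (S : Finset (Fin m)) : Matrix (Fin m) (Fin n) ℂ :=
  fun i j => if i ∈ S then A i j else 0

/-- `σ_r(A)²` : the smallest nonzero eigenvalue of `AᴴA`. -/
def sigmaRSq (A : Matrix (Fin m) (Fin n) ℂ) : ℝ :=
  sInf {μ : ℝ | μ ≠ 0 ∧ ∃ i, (Matrix.isHermitian_conjTranspose_mul_self A).eigenvalues i = μ}

/-- `σ₁(M)²` : the largest eigenvalue of `MᴴM`, i.e. the largest singular value squared. -/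
def sigma1Sq {k : Type*} [Fintype k] (M : Matrix k (Fin n) ℂ) : ℝ :=
  ⨆ i, (Matrix.isHermitian_conjTranspose_mul_self M).eigenvalues i

/-- `Û(x) = {i ∈ [m] : ψ_i(x) ≠ 0}`. -/
def Uhat (A : Matrix (Fin m) (Fin n) ℂ) (b : Fin m → ℂ) (x : Fin n → ℂ) : Finset (Fin m) :=
  Finset.univ.filter fun i => psi A b x i ≠ 0

/-- The greedy index set `U(x)` with relaxation parameter `θ = 1/2`. -/
def Ugreedy (A : Matrix (Fin m) (Fin n) ℂ) (b : Fin m → ℂ) (x : Fin n → ℂ) : Finset (Fin m) :=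
  Finset.univ.filter fun i =>
    (1 / 2) * psiMax A b x + (1 / 2) * (vecNormSq (b - A.mulVec x) / frobSq A) ≤ psi A b x i

/-- `η(x) = Σ_{i ∈ U(x)} (b_i − A_{i,:}x) e_i`. -/
def eta (A : Matrix (Fin m) (Fin n) ℂ) (b : Fin m → ℂ) (x : Fin n → ℂ) : Fin m → ℂ :=
  fun i => if i ∈ Ugreedy A b x then b i - A.mulVec x i else 0

/-- `uᴴ v`, the conjugate dot product. -/
def dotc {k : ℕ} (u v : Fin k → ℂ) : ℂ := ∑ i, (starRingEnd ℂ) (u i) * v i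

/-- `φ(x, η) = |ηᴴ(b − A x)|² / ‖Aᴴ η‖₂²`. -/
def phi (A : Matrix (Fin m) (Fin n) ℂ) (b : Fin m → ℂ) (x : Fin n → ℂ) (η : Fin m → ℂ) : ℝ :=
  ‖dotc η (b - A.mulVec x)‖ ^ 2 / vecNormSq (Aᴴ.mulVec η)

end

noncomputable section
open ComplexConjugate

def toE {k : ℕ} (v : Fin k → ℂ) : EuclideanSpace ℂ (Fin k) := WithLp.toLp 2 v

lemma toE_add {k : ℕ} (u v : Fin k → ℂ) : toE (u + v) = toE u + toE v := rfl
lemma toE_sub {k : ℕ} (u v : Fin k → ℂ) : toE (u - v) = toE u - toE v := rfl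
lemma toE_smul {k : ℕ} (c : ℂ) (v : Fin k → ℂ) : toE (c • v) = c • toE v := rfl

lemma dotc_eq_inner {k : ℕ} (u v : Fin k → ℂ) :
    dotc u v = @inner ℂ (EuclideanSpace ℂ (Fin k)) _ (toE u) (toE v) := by
  simp [dotc, PiLp.inner_apply, RCLike.inner_apply, toE, mul_comm]

lemma vecNormSq_eq {k : ℕ} (v : Fin k → ℂ) :
    vecNormSq v = ‖toE v‖ ^ 2 := by
  rw [EuclideanSpace.norm_eq, Real.sq_sqrt]
  · rfl
  · positivity

lemma vecNormSq_nonneg {k : ℕ} (v : Fin k → ℂ) : 0 ≤ vecNormSq v := by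
  rw [vecNormSq_eq]; positivity

lemma vecNormSq_eq_zero_iff {k : ℕ} (v : Fin k → ℂ) : vecNormSq v = 0 ↔ v = 0 := by
  rw [vecNormSq_eq]
  constructor
  · intro h
    have h2 : ‖toE v‖ = 0 := by nlinarith [norm_nonneg (toE v)]
    have := norm_eq_zero.mp h2
    exact congrArg (fun w => WithLp.ofLp w) this
  · intro h; subst h
    show ‖toE 0‖ ^ 2 = 0
    have : toE (0 : Fin k → ℂ) = 0 := rfl
    rw [this]; simp

lemma dotc_adjoint {m n : ℕ} (A : Matrix (Fin m) (Fin n) ℂ) (u : Fin m → ℂ) (v : Fin n → ℂ) :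
    dotc (Aᴴ.mulVec u) v = dotc u (A.mulVec v) := by
  simp only [dotc, Matrix.mulVec, dotProduct, Matrix.conjTranspose_apply, map_sum,
    Finset.mul_sum, Finset.sum_mul]
  rw [Finset.sum_comm]
  congr 1; ext i; congr 1; ext j
  simp [Complex.ext_iff]; constructor <;> ring

lemma dotc_conj {k : ℕ} (u v : Fin k → ℂ) : dotc u v = conj (dotc v u) := by
  simp [dotc, map_sum]; congr 1; ext i; ring

lemma re_dotc_self {k : ℕ} (v : Fin k → ℂ) : (dotc v v).re = vecNormSq v := by
  rw [dotc_eq_inner, vecNormSq_eq, ← inner_self_eq_norm_sq (𝕜 := ℂ)]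
  rfl

lemma dotc_sum {k : ℕ} (u : Fin k → ℂ) {ι : Type*} (s : Finset ι) (f : ι → Fin k → ℂ) :
    dotc u (∑ j ∈ s, f j) = ∑ j ∈ s, dotc u (f j) := by
  simp only [dotc, Finset.sum_apply, Finset.mul_sum]
  exact Finset.sum_comm

lemma dotc_smul_right {k : ℕ} (u : Fin k → ℂ) (a : ℂ) (w : Fin k → ℂ) :
    dotc u (a • w) = a * dotc u w := by
  simp only [dotc, Pi.smul_apply, smul_eq_mul, Finset.mul_sum]
  congr 1; ext i; ring

lemma dotc_real_smul_right {k : ℕ} (u : Fin k → ℂ) (r : ℝ) (w : Fin k → ℂ) :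
    dotc u (r • w) = (r : ℂ) * dotc u w := by
  have : r • w = (r : ℂ) • w := by
    funext i; simp [Complex.real_smul]
  rw [this, dotc_smul_right]

def fromE {k : ℕ} (v : EuclideanSpace ℂ (Fin k)) : Fin k → ℂ := WithLp.ofLp v

@[simp] lemma toE_fromE {k : ℕ} (v : EuclideanSpace ℂ (Fin k)) : toE (fromE v) = v := rfl
@[simp] lemma fromE_toE {k : ℕ} (v : Fin k → ℂ) : fromE (toE v) = v := rfl
lemma fromE_add {k : ℕ} (u v : EuclideanSpace ℂ (Fin k)) : fromE (u + v) = fromE u + fromE v := rfl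
lemma fromE_smul {k : ℕ} (c : ℂ) (v : EuclideanSpace ℂ (Fin k)) : fromE (c • v) = c • fromE v := rfl
lemma fromE_real_smul {k : ℕ} (r : ℝ) (v : EuclideanSpace ℂ (Fin k)) :
    fromE (r • v) = r • fromE v := rfl

lemma fromE_sum {k : ℕ} {ι : Type*} (s : Finset ι) (f : ι → EuclideanSpace ℂ (Fin k)) :
    fromE (∑ j ∈ s, f j) = ∑ j ∈ s, fromE (f j) := by
  induction s using Finset.cons_induction with
  | empty => rfl
  | cons a s ha ih => rw [Finset.sum_cons, Finset.sum_cons, fromE_add, ih]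

section spectral
variable {m n : ℕ} {B : Matrix (Fin n) (Fin n) ℂ} (hB : B.IsHermitian)

lemma norm_decomp (v : Fin n → ℂ) :
    vecNormSq v = ∑ j, ‖hB.eigenvectorBasis.repr (toE v) j‖ ^ 2 := by
  rw [vecNormSq_eq, ← hB.eigenvectorBasis.repr.norm_map (toE v),
    EuclideanSpace.norm_eq, Real.sq_sqrt]
  positivity

lemma vec_decomp (v : Fin n → ℂ) :
    v = ∑ j, hB.eigenvectorBasis.repr (toE v) j • fromE (hB.eigenvectorBasis j) := by
  conv_lhs => rw [show v = fromE (toE v) from rfl, ← hB.eigenvectorBasis.sum_repr (toE v)]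
  rw [fromE_sum]
  exact Finset.sum_congr rfl fun j _ => rfl

lemma dotc_basis_eq_repr (v : Fin n → ℂ) (j : Fin n) :
    dotc (fromE (hB.eigenvectorBasis j)) v = hB.eigenvectorBasis.repr (toE v) j := by
  rw [dotc_eq_inner, toE_fromE, hB.eigenvectorBasis.repr_apply_apply]

lemma mulVec_eigenbasis (j : Fin n) :
    B.mulVec (fromE (hB.eigenvectorBasis j))
      = hB.eigenvalues j • fromE (hB.eigenvectorBasis j) :=
  hB.mulVec_eigenvectorBasis j

lemma quad_decomp (v : Fin n → ℂ) :
    (dotc v (B.mulVec v)).re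
      = ∑ j, hB.eigenvalues j * ‖hB.eigenvectorBasis.repr (toE v) j‖ ^ 2 := by
  set c : Fin n → ℂ := fun j => hB.eigenvectorBasis.repr (toE v) j with hc
  have hv : B.mulVec v = ∑ j, c j • (hB.eigenvalues j • fromE (hB.eigenvectorBasis j)) := by
    conv_lhs => rw [vec_decomp hB v]
    rw [← Matrix.mulVecLin_apply, map_sum]
    refine Finset.sum_congr rfl fun j _ => ?_
    rw [_root_.map_smul, Matrix.mulVecLin_apply, mulVec_eigenbasis hB]
  rw [hv, dotc_sum, Complex.re_sum]
  refine Finset.sum_congr rfl fun j _ => ?_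
  rw [show (c j • (hB.eigenvalues j • fromE (hB.eigenvectorBasis j)) : Fin n → ℂ)
      = hB.eigenvalues j • (c j • fromE (hB.eigenvectorBasis j)) from smul_comm _ _ _,
    dotc_real_smul_right, dotc_smul_right, dotc_conj, dotc_basis_eq_repr hB v]
  have h2 : c j * conj (c j) = ((‖c j‖ ^ 2 : ℝ) : ℂ) := by
    rw [mul_comm, Complex.conj_mul']
    norm_cast
  rw [show ((hB.eigenvalues j : ℂ) * (c j * conj (c j))) 
      = ((hB.eigenvalues j : ℂ) * ((‖c j‖^2 : ℝ) : ℂ)) from by rw [h2],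
    show ((hB.eigenvalues j : ℂ) * ((‖c j‖ ^2 : ℝ) : ℂ)) = ((hB.eigenvalues j * ‖c j‖^2 : ℝ) : ℂ) from by push_cast; ring]
  exact Complex.ofReal_re _

end spectral

lemma dotc_zero_left {k : ℕ} (v : Fin k → ℂ) : dotc 0 v = 0 := by simp [dotc]
lemma dotc_zero_right {k : ℕ} (v : Fin k → ℂ) : dotc v 0 = 0 := by simp [dotc]

lemma dotc_adjoint' {m n : ℕ} (A : Matrix (Fin m) (Fin n) ℂ) (v : Fin n → ℂ) (u : Fin m → ℂ) :
    dotc v (Aᴴ.mulVec u) = dotc (A.mulVec v) u := by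
  rw [dotc_conj, dotc_adjoint, ← dotc_conj]

lemma quad_eq_vecNormSq_mulVec {m n : ℕ} (M : Matrix (Fin m) (Fin n) ℂ) (v : Fin n → ℂ) :
    (dotc v ((Mᴴ * M).mulVec v)).re = vecNormSq (M.mulVec v) := by
  rw [← Matrix.mulVec_mulVec, dotc_adjoint', re_dotc_self]

lemma vecNormSq_mulVec_le {m n : ℕ} (hn : Nonempty (Fin n)) (M : Matrix (Fin m) (Fin n) ℂ)
    (v : Fin n → ℂ) :
    vecNormSq (M.mulVec v) ≤ sigma1Sq M * vecNormSq v := by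
  have hB := Matrix.isHermitian_conjTranspose_mul_self M
  rw [← quad_eq_vecNormSq_mulVec, quad_decomp hB, norm_decomp hB v, Finset.mul_sum]
  refine Finset.sum_le_sum fun j _ => ?_
  have h1 : hB.eigenvalues j ≤ sigma1Sq M :=
    le_ciSup (Set.Finite.bddAbove (Set.finite_range _)) j
  exact mul_le_mul_of_nonneg_right h1 (by positivity)

lemma eigen_all_zero {m n : ℕ} (M : Matrix (Fin m) (Fin n) ℂ)
    (h : ∀ j, (Matrix.isHermitian_conjTranspose_mul_self M).eigenvalues j = 0) : M = 0 := by
  have hmv : ∀ v, M.mulVec v = 0 := by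
    intro v
    have h1 : vecNormSq (M.mulVec v) = 0 := by
      rw [← quad_eq_vecNormSq_mulVec, quad_decomp (Matrix.isHermitian_conjTranspose_mul_self M)]
      simp [h]
    exact (vecNormSq_eq_zero_iff _).mp h1
  ext i j
  have h2 := congrFun (hmv (Pi.single j 1)) i
  rw [Matrix.mulVec_single] at h2
  simpa using h2

lemma sigma1Sq_pos {m n : ℕ} (hn : Nonempty (Fin n)) (M : Matrix (Fin m) (Fin n) ℂ)
    (hM : M ≠ 0) : 0 < sigma1Sq M := by
  by_contra h
  push_neg at h
  refine hM (eigen_all_zero M fun j => le_antisymm ?_ (Matrix.eigenvalues_conjTranspose_mul_self_nonneg M j))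
  calc (Matrix.isHermitian_conjTranspose_mul_self M).eigenvalues j
      ≤ sigma1Sq M := le_ciSup (Set.Finite.bddAbove (Set.finite_range _)) j
    _ ≤ 0 := h

lemma sigmaRSq_mul_le {m n : ℕ} (A : Matrix (Fin m) (Fin n) ℂ) (hA0 : A ≠ 0) (w : Fin m → ℂ) :
    sigmaRSq A * vecNormSq (Aᴴ.mulVec w) ≤ vecNormSq (A.mulVec (Aᴴ.mulVec w)) := by
  have hB := Matrix.isHermitian_conjTranspose_mul_self A
  set v : Fin n → ℂ := Aᴴ.mulVec w with hv
  set S : Set ℝ := {μ : ℝ | μ ≠ 0 ∧ ∃ i, (Matrix.isHermitian_conjTranspose_mul_self A).eigenvalues i = μ} with hS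
  have hne : S.Nonempty := by
    by_contra h
    rw [Set.not_nonempty_iff_eq_empty] at h
    refine hA0 (eigen_all_zero A fun j => ?_)
    by_contra hj
    have : (Matrix.isHermitian_conjTranspose_mul_self A).eigenvalues j ∈ S := ⟨hj, j, rfl⟩
    simp [h] at this
  have hbdd : BddBelow S := by
    refine ⟨0, fun μ hμ => ?_⟩
    obtain ⟨h1, i, h2⟩ := hμ
    exact h2 ▸ Matrix.eigenvalues_conjTranspose_mul_self_nonneg A i
  have hkey : ∀ j, sInf S * ‖hB.eigenvectorBasis.repr (toE v) j‖ ^ 2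
      ≤ hB.eigenvalues j * ‖hB.eigenvectorBasis.repr (toE v) j‖ ^ 2 := by
    intro j
    rcases eq_or_ne (hB.eigenvalues j) 0 with h0 | h0
    · have hAv : A.mulVec (fromE (hB.eigenvectorBasis j)) = 0 := by
        have hq : vecNormSq (A.mulVec (fromE (hB.eigenvectorBasis j))) = 0 := by
          rw [← quad_eq_vecNormSq_mulVec, show (Aᴴ * A).mulVec (fromE (hB.eigenvectorBasis j))
              = hB.eigenvalues j • fromE (hB.eigenvectorBasis j) from mulVec_eigenbasis hB j, h0]
          norm_num
          rw [dotc_zero_right]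
          rfl
        exact (vecNormSq_eq_zero_iff _).mp hq
      have hc0 : hB.eigenvectorBasis.repr (toE v) j = 0 := by
        rw [← dotc_basis_eq_repr, hv, dotc_adjoint', hAv, dotc_zero_left]
      rw [hc0]
      simp
    · have hle : sInf S ≤ hB.eigenvalues j := csInf_le hbdd ⟨h0, j, rfl⟩
      exact mul_le_mul_of_nonneg_right hle (by positivity)
  calc sigmaRSq A * vecNormSq v
      = ∑ j, sInf S * ‖hB.eigenvectorBasis.repr (toE v) j‖ ^ 2 := by
        rw [norm_decomp hB v, Finset.mul_sum]; rfl
    _ ≤ ∑ j, hB.eigenvalues j * ‖hB.eigenvectorBasis.repr (toE v) j‖ ^ 2 :=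
        Finset.sum_le_sum fun j _ => hkey j
    _ = vecNormSq (A.mulVec v) := by rw [← quad_decomp hB v, quad_eq_vecNormSq_mulVec]

lemma sigmaRSq_nonneg {m n : ℕ} (A : Matrix (Fin m) (Fin n) ℂ) : 0 ≤ sigmaRSq A := by
  rcases Set.eq_empty_or_nonempty
      {μ : ℝ | μ ≠ 0 ∧ ∃ i, (Matrix.isHermitian_conjTranspose_mul_self A).eigenvalues i = μ} with h | h
  · unfold sigmaRSq; rw [h, Real.sInf_empty]
  · unfold sigmaRSq
    refine le_csInf h fun μ hμ => ?_
    obtain ⟨h1, i, h2⟩ := hμ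
    exact h2 ▸ Matrix.eigenvalues_conjTranspose_mul_self_nonneg A i

lemma vecNormSq_neg {k : ℕ} (v : Fin k → ℂ) : vecNormSq (-v) = vecNormSq v := by
  simp [vecNormSq]

lemma toE_real_smul {k : ℕ} (t : ℝ) (v : Fin k → ℂ) : toE (t • v) = (t : ℂ) • toE v := by
  ext i
  show t • v i = (t:ℂ) * v i
  simp [Complex.real_smul]

lemma vecNormSq_real_smul_sub {k : ℕ} (t : ℝ) (u w : Fin k → ℂ) :
    vecNormSq (t • u - w) = t^2 * vecNormSq u - 2*t*(dotc u w).re + vecNormSq w := by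
  rw [vecNormSq_eq, toE_sub, toE_real_smul,
    @norm_sub_sq ℂ (EuclideanSpace ℂ (Fin k)) _ _ _ ((t:ℂ) • toE u) (toE w),
    inner_smul_left, norm_smul, vecNormSq_eq u, vecNormSq_eq w, dotc_eq_inner]
  simp [Complex.mul_re, mul_pow]
  ring

lemma two_re_dotc_le {k : ℕ} (u w : Fin k → ℂ) (t : ℝ) :
    2*t*(dotc u w).re ≤ t^2 * vecNormSq u + vecNormSq w := by
  have h0 : 0 ≤ vecNormSq (t • u - w) := vecNormSq_nonneg _
  rw [vecNormSq_real_smul_sub] at h0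
  linarith

lemma frobSq_eq_sum_rowNormSq {m n : ℕ} (A : Matrix (Fin m) (Fin n) ℂ) :
    frobSq A = ∑ i, rowNormSq A i := rfl

lemma frobSq_rowSub {m n : ℕ} (A : Matrix (Fin m) (Fin n) ℂ) (S : Finset (Fin m)) :
    frobSq (rowSub A S) = ∑ i ∈ S, rowNormSq A i := by
  unfold frobSq rowSub
  rw [Finset.sum_congr rfl (fun i (_ : i ∈ Finset.univ) =>
    (show (∑ j, ‖(if i ∈ S then A i j else 0)‖^2) = if i ∈ S then rowNormSq A i else 0 by
      split <;> simp [rowNormSq]))]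
  rw [Finset.sum_ite_mem, Finset.univ_inter]

lemma rowNormSq_pos {m n : ℕ} {A : Matrix (Fin m) (Fin n) ℂ} {i : Fin m} (hA : A i ≠ 0) :
    0 < rowNormSq A i := by
  obtain ⟨j, hj⟩ := Function.ne_iff.mp hA
  have h1 : 0 < ‖A i j‖^2 := pow_pos (norm_pos_iff.mpr hj) 2
  have h2 : ‖A i j‖^2 ≤ rowNormSq A i :=
    Finset.single_le_sum (f := fun j => ‖A i j‖^2) (fun _ _ => by positivity) (Finset.mem_univ j)
  linarith

lemma residual_facts {m n : ℕ} (A : Matrix (Fin m) (Fin n) ℂ) (b : Fin m → ℂ)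
    (hA : ∀ i, A i ≠ 0) (xs : Fin n → ℂ) (hxs1 : A.mulVec xs = b)
    (xk : Fin n → ℂ) (hr : b - A.mulVec xk ≠ 0)
    (ρ : ℝ) (hρ0 : 0 < ρ)
    (hρb : ρ ≤ ((1 / 2) * (frobSq A / frobSq (rowSub A (Uhat A b xk))) + 1 / 2) *
            (frobSq (rowSub A (Ugreedy A b xk)) / frobSq A) *
            (sigmaRSq A / sigma1Sq (rowSub A (Ugreedy A b xk))))
    (hrange : ∃ y, xk - xs = Aᴴ.mulVec y) :
    0 < vecNormSq (eta A b xk) ∧ 0 < vecNormSq (Aᴴ.mulVec (eta A b xk)) ∧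
    dotc (eta A b xk) (b - A.mulVec xk) = ((vecNormSq (eta A b xk) : ℝ) : ℂ) ∧
    ρ * vecNormSq (xk - xs) * vecNormSq (Aᴴ.mulVec (eta A b xk)) ≤ (vecNormSq (eta A b xk))^2 := by
  classical
  obtain ⟨i₀, hi₀⟩ := Function.ne_iff.mp hr
  have hn : Nonempty (Fin n) := by
    by_contra h
    rw [not_nonempty_iff] at h
    apply hi₀
    have hz : ∀ (z : Fin n → ℂ), A.mulVec z = 0 := by
      intro z; funext i
      simp [Matrix.mulVec, dotProduct, Finset.univ_eq_empty]
    have hb0 : b = 0 := by rw [← hxs1, hz]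
    show (b - A.mulVec xk) i₀ = 0
    rw [hb0, hz]; simp
  have hA0 : A ≠ 0 := fun h => hA i₀ (by rw [h]; rfl)
  have hrow : ∀ i, 0 < rowNormSq A i := fun i => rowNormSq_pos (hA i)
  set r : Fin m → ℂ := b - A.mulVec xk with hrdef
  have hpsi_mul : ∀ i, psi A b xk i * rowNormSq A i = ‖r i‖^2 := by
    intro i
    rw [psi, div_mul_cancel₀ _ (ne_of_gt (hrow i))]
    rfl
  have hmne : Nonempty (Fin m) := ⟨i₀⟩
  obtain ⟨i₁, -, hi₁⟩ := Finset.exists_max_image Finset.univ (psi A b xk) ⟨i₀, Finset.mem_univ i₀⟩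
  have hpsimax : psiMax A b xk = psi A b xk i₁ := by
    refine le_antisymm (ciSup_le fun i => hi₁ i (Finset.mem_univ i)) ?_
    exact le_ciSup (Set.Finite.bddAbove (Set.finite_range _)) i₁
  have hpsimax_le : ∀ i, psi A b xk i ≤ psiMax A b xk := fun i =>
    hpsimax ▸ hi₁ i (Finset.mem_univ i)
  set R : ℝ := vecNormSq r with hRdef
  have hR : 0 < R := by
    rcases lt_or_eq_of_le (vecNormSq_nonneg r) with h | h
    · exact h
    · exact absurd ((vecNormSq_eq_zero_iff r).mp h.symm) hr
  set F : ℝ := frobSq A with hFdef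
  have hF : 0 < F := by
    rw [hFdef, frobSq_eq_sum_rowNormSq]
    exact Finset.sum_pos (fun i _ => hrow i) ⟨i₀, Finset.mem_univ i₀⟩
  have hpsi0 : 0 < psi A b xk i₀ := by
    rw [psi]
    have h1 : 0 < ‖b i₀ - A.mulVec xk i₀‖^2 := pow_pos (norm_pos_iff.mpr hi₀) 2
    exact div_pos h1 (hrow i₀)
  have hpsimax_pos : 0 < psiMax A b xk := lt_of_lt_of_le hpsi0 (hpsimax_le i₀)
  have hRsum : R = ∑ i, psi A b xk i * rowNormSq A i := by
    rw [hRdef, vecNormSq]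
    exact Finset.sum_congr rfl fun i _ => (hpsi_mul i).symm
  set FU' : ℝ := frobSq (rowSub A (Uhat A b xk)) with hFU'def
  have hFU'sum : FU' = ∑ i ∈ Uhat A b xk, rowNormSq A i := frobSq_rowSub _ _
  have hi₀U : i₀ ∈ Uhat A b xk := by
    rw [Uhat, Finset.mem_filter]
    exact ⟨Finset.mem_univ i₀, ne_of_gt hpsi0⟩
  have hFU' : 0 < FU' := by
    rw [hFU'sum]
    exact Finset.sum_pos' (fun i _ => le_of_lt (hrow i)) ⟨i₀, hi₀U, hrow i₀⟩
  have hRleU : R ≤ psiMax A b xk * FU' := by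
    rw [hRsum, hFU'sum, Finset.mul_sum]
    rw [← Finset.sum_subset (Finset.subset_univ (Uhat A b xk)) (fun i _ hiU => ?_)]
    · refine Finset.sum_le_sum fun i _ => ?_
      exact mul_le_mul_of_nonneg_right (hpsimax_le i) (le_of_lt (hrow i))
    · rw [Uhat, Finset.mem_filter, not_and, not_not] at hiU
      rw [hiU (Finset.mem_univ i), zero_mul]
  have hRleF : R ≤ psiMax A b xk * F := by
    rw [hRsum, hFdef, frobSq_eq_sum_rowNormSq, Finset.mul_sum]
    refine Finset.sum_le_sum fun i _ => ?_
    exact mul_le_mul_of_nonneg_right (hpsimax_le i) (le_of_lt (hrow i))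
  set thr : ℝ := (1 / 2) * psiMax A b xk + (1 / 2) * (R / F) with hthr
  have hthr_pos : 0 < thr := by
    have h1 : 0 < R / F := div_pos hR hF
    rw [hthr]; linarith [hpsimax_pos]
  have hmemU : ∀ i, i ∈ Ugreedy A b xk ↔ thr ≤ psi A b xk i := by
    intro i
    rw [Ugreedy, Finset.mem_filter]
    constructor
    · rintro ⟨-, h⟩
      rw [← hrdef, ← hRdef, ← hFdef] at h
      exact h
    · intro h
      refine ⟨Finset.mem_univ i, ?_⟩
      rw [← hrdef, ← hRdef, ← hFdef]
      exact h
  have hi₁U : i₁ ∈ Ugreedy A b xk := by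
    rw [hmemU]
    rw [← hpsimax, hthr]
    have h1 : R / F ≤ psiMax A b xk := by
      rw [div_le_iff₀ hF]
      linarith [hRleF]
    linarith
  set η : Fin m → ℂ := eta A b xk with hη
  set s : ℝ := vecNormSq η with hsdef
  have hssum : s = ∑ i ∈ Ugreedy A b xk, ‖r i‖^2 := by
    rw [hsdef, vecNormSq, ← Finset.sum_subset (Finset.subset_univ (Ugreedy A b xk))
      (fun i _ hiU => ?_)]
    · refine Finset.sum_congr rfl fun i hiU => ?_
      rw [hη, eta, if_pos hiU]
      rfl
    · rw [hη, eta, if_neg hiU]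
      simp
  have hpsi_i₁_pos : 0 < psi A b xk i₁ := lt_of_lt_of_le hpsi0 (hi₁ i₀ (Finset.mem_univ i₀))
  have hri₁ : r i₁ ≠ 0 := by
    intro h
    rw [psi] at hpsi_i₁_pos
    have h2 : b i₁ - A.mulVec xk i₁ = 0 := h
    rw [h2] at hpsi_i₁_pos
    simp at hpsi_i₁_pos
  have hs : 0 < s := by
    rw [hssum]
    exact Finset.sum_pos' (fun i _ => by positivity)
      ⟨i₁, hi₁U, pow_pos (norm_pos_iff.mpr hri₁) 2⟩
  have hdotc : dotc η r = ((s : ℝ) : ℂ) := by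
    have h1 : ∀ i, (starRingEnd ℂ) (η i) * r i
        = if i ∈ Ugreedy A b xk then ((‖r i‖^2 : ℝ) : ℂ) else 0 := by
      intro i
      rw [hη, eta]
      split
      · show (starRingEnd ℂ) (r i) * r i = ((‖r i‖^2 : ℝ) : ℂ)
        rw [Complex.conj_mul']
        norm_cast
      · simp
    rw [dotc, Finset.sum_congr rfl fun i _ => h1 i, Finset.sum_ite_mem, Finset.univ_inter,
      hssum]
    push_cast
    rfl
  -- the row submatrix M over the greedy set
  set M : Matrix (Fin m) (Fin n) ℂ := rowSub A (Ugreedy A b xk) with hMdef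
  set FU : ℝ := frobSq M with hFUdef
  have hFUsum : FU = ∑ i ∈ Ugreedy A b xk, rowNormSq A i := frobSq_rowSub _ _
  have hFU : 0 < FU := by
    rw [hFUsum]
    exact Finset.sum_pos' (fun i _ => le_of_lt (hrow i)) ⟨i₁, hi₁U, hrow i₁⟩
  have hM0 : M ≠ 0 := by
    intro h
    rw [hFUdef, h] at hFU
    simp [frobSq] at hFU
  set lam : ℝ := sigma1Sq M with hlamdef
  have hlampos : 0 < lam := sigma1Sq_pos hn M hM0
  have hthrFU : thr * FU ≤ s := by
    rw [hssum, hFUsum, Finset.mul_sum]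
    refine Finset.sum_le_sum fun i hiU => ?_
    rw [← hpsi_mul i]
    exact mul_le_mul_of_nonneg_right ((hmemU i).mp hiU) (le_of_lt (hrow i))
  have hAM : Aᴴ.mulVec η = Mᴴ.mulVec η := by
    funext j
    show ∑ i, Aᴴ j i * η i = ∑ i, Mᴴ j i * η i
    refine Finset.sum_congr rfl fun i _ => ?_
    rw [Matrix.conjTranspose_apply, Matrix.conjTranspose_apply, hMdef, rowSub]
    by_cases hiU : i ∈ Ugreedy A b xk
    · rw [if_pos hiU]
    · rw [if_neg hiU, hη, eta, if_neg hiU]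
      simp
  set G : ℝ := vecNormSq (Aᴴ.mulVec η) with hGdef
  have hrA : A.mulVec (xs - xk) = r := by
    rw [Matrix.mulVec_sub, hxs1, hrdef]
  have hdotcG : dotc (Aᴴ.mulVec η) (xs - xk) = ((s : ℝ) : ℂ) := by
    rw [dotc_adjoint, hrA, hdotc]
  have hG : 0 < G := by
    rcases lt_or_eq_of_le (vecNormSq_nonneg (Aᴴ.mulVec η)) with h | h
    · exact h
    · exfalso
      have h2 : Aᴴ.mulVec η = 0 := (vecNormSq_eq_zero_iff _).mp h.symm
      rw [h2, dotc_zero_left] at hdotcG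
      have h3 : s = 0 := by exact_mod_cast hdotcG.symm
      linarith
  -- G ≤ lam * s
  have hGbound : G ≤ lam * s := by
    set v : Fin n → ℂ := Mᴴ.mulVec η with hvdef
    have hGv : G = vecNormSq v := by rw [hGdef, hAM]
    have hK1 : vecNormSq (M.mulVec v) ≤ lam * G := by
      rw [hGv]
      exact vecNormSq_mulVec_le hn M v
    have hK2 : (dotc η (M.mulVec v)).re = G := by
      rw [← dotc_adjoint, ← hvdef, re_dotc_self, hGv]
    set t : ℝ := G / s with htdef
    have hts : t * s = G := div_mul_cancel₀ G (ne_of_gt hs)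
    have hK3 := two_re_dotc_le η (M.mulVec v) t
    rw [hK2, ← hsdef] at hK3
    have h3 : t^2 * s = t * G := by rw [← hts]; ring
    have h4 : 2*t*G ≤ t*G + lam*G := by linarith [hK3, hK1, h3]
    have h5 : t ≤ lam := le_of_mul_le_mul_right (by linarith) hG
    rw [← hts]
    exact mul_le_mul_of_nonneg_right h5 (le_of_lt hs)
  -- sigmaR bound
  obtain ⟨y, hy⟩ := hrange
  have hσ : sigmaRSq A * vecNormSq (xk - xs) ≤ R := by
    have h6 := sigmaRSq_mul_le A hA0 y
    rw [← hy] at h6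
    have h7 : A.mulVec (xk - xs) = -r := by
      rw [show xk - xs = -(xs - xk) by ring, Matrix.mulVec_neg, hrA]
    rw [h7, vecNormSq_neg] at h6
    exact h6
  -- combine
  set Q12 : ℝ := FU/(2*FU') + FU/(2*F) with hQ12def
  have hQ12pos : 0 < Q12 := by
    have h1 : 0 < FU/(2*FU') := div_pos hFU (by linarith)
    have h2 : 0 < FU/(2*F) := div_pos hFU (by linarith)
    rw [hQ12def]; linarith
  have hsQ : Q12 * R ≤ s := by
    have h8 : R / FU' ≤ psiMax A b xk := by
      rw [div_le_iff₀ hFU']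
      linarith [hRleU]
    have h9 : R/(2*FU') + R/(2*F) ≤ thr := by
      rw [hthr, show R/(2*FU') = (1/2)*(R/FU') by ring, show R/(2*F) = (1/2)*(R/F) by ring]
      linarith
    have h10 : Q12 * R = (R/(2*FU') + R/(2*F)) * FU := by
      rw [hQ12def]
      field_simp
    rw [h10]
    calc (R/(2*FU') + R/(2*F)) * FU ≤ thr * FU :=
          mul_le_mul_of_nonneg_right h9 (le_of_lt hFU)
      _ ≤ s := hthrFU
  have hrholam : ρ * lam ≤ Q12 * sigmaRSq A := by
    have h11 : ((1/2)*(F/FU') + 1/2)*(FU/F) = Q12 := by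
      rw [hQ12def]
      field_simp
    have h12 : ρ ≤ Q12 * (sigmaRSq A / lam) := by
      calc ρ ≤ ((1/2)*(F/FU') + 1/2)*(FU/F)*(sigmaRSq A / lam) := hρb
        _ = Q12 * (sigmaRSq A / lam) := by rw [h11]
    have h13 := mul_le_mul_of_nonneg_right h12 (le_of_lt hlampos)
    rw [mul_assoc, div_mul_cancel₀ _ (ne_of_gt hlampos)] at h13
    exact h13
  refine ⟨hs, hG, hdotc, ?_⟩
  have hE2 : 0 ≤ vecNormSq (xk - xs) := vecNormSq_nonneg _
  have c1 : ρ * vecNormSq (xk - xs) * G ≤ ρ * vecNormSq (xk - xs) * (lam * s) :=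
    mul_le_mul_of_nonneg_left hGbound (mul_nonneg (le_of_lt hρ0) hE2)
  have c2 : ρ * lam * vecNormSq (xk - xs) ≤ Q12 * sigmaRSq A * vecNormSq (xk - xs) :=
    mul_le_mul_of_nonneg_right hrholam hE2
  have c3 : Q12 * (sigmaRSq A * vecNormSq (xk - xs)) ≤ Q12 * R :=
    mul_le_mul_of_nonneg_left hσ (le_of_lt hQ12pos)
  have c4 : ρ * lam * vecNormSq (xk - xs) ≤ s := by
    calc ρ * lam * vecNormSq (xk - xs) ≤ Q12 * sigmaRSq A * vecNormSq (xk - xs) := c2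
      _ = Q12 * (sigmaRSq A * vecNormSq (xk - xs)) := by ring
      _ ≤ Q12 * R := c3
      _ ≤ s := hsQ
  have c5 := mul_le_mul_of_nonneg_right c4 (le_of_lt hs)
  have c6 : ρ * vecNormSq (xk - xs) * (lam * s) = ρ * lam * vecNormSq (xk - xs) * s := by ring
  have c7 : s * s = s^2 := by ring
  linarith [c1, c5]

lemma dotc_add_left {k : ℕ} (u v w : Fin k → ℂ) : dotc (u + v) w = dotc u w + dotc v w := by
  simp only [dotc, Pi.add_apply, map_add, add_mul, Finset.sum_add_distrib]

lemma dotc_neg_right {k : ℕ} (u w : Fin k → ℂ) : dotc u (-w) = -dotc u w := by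
  simp [dotc, Finset.sum_neg_distrib]

lemma dotc_sub_right {k : ℕ} (u v w : Fin k → ℂ) : dotc u (v - w) = dotc u v - dotc u w := by
  simp only [dotc, Pi.sub_apply, mul_sub, Finset.sum_sub_distrib]

lemma re_dotc_comm {k : ℕ} (u v : Fin k → ℂ) : (dotc u v).re = (dotc v u).re := by
  rw [dotc_conj]
  exact Complex.conj_re _

lemma vecNormSq_add {k : ℕ} (u v : Fin k → ℂ) :
    vecNormSq (u + v) = vecNormSq u + 2*(dotc u v).re + vecNormSq v := by
  rw [vecNormSq_eq, vecNormSq_eq u, vecNormSq_eq v, toE_add,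
    @norm_add_sq ℂ (EuclideanSpace ℂ (Fin k)) _ _ _ (toE u) (toE v), dotc_eq_inner]
  norm_num

lemma vecNormSq_sub {k : ℕ} (u w : Fin k → ℂ) :
    vecNormSq (u - w) = vecNormSq u - 2*(dotc u w).re + vecNormSq w := by
  rw [sub_eq_add_neg, vecNormSq_add, dotc_neg_right, vecNormSq_neg]
  simp
  ring

lemma vecNormSq_csmul {k : ℕ} (c : ℂ) (v : Fin k → ℂ) :
    vecNormSq (c • v) = ‖c‖^2 * vecNormSq v := by
  simp [vecNormSq, norm_mul, mul_pow, Finset.mul_sum]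

lemma re_dotc_csmul_real {k : ℕ} (u : Fin k → ℂ) (β : ℝ) (w : Fin k → ℂ) :
    (dotc u ((β:ℂ) • w)).re = β * (dotc u w).re := by
  rw [dotc_smul_right]
  simp [Complex.mul_re]

lemma step_bound {k : ℕ} (e e' d : Fin k → ℂ) (α β ρ φ : ℝ)
    (hα0 : 0 < α) (hα2 : α < 2) (hβ0 : 0 < β) (hρ0 : 0 < ρ)
    (hβle : β ≤ α * (3 - α) * ρ)
    (hed : (dotc e d).re = -(α * φ)) (hd : vecNormSq d = α^2 * φ)
    (hφ : ρ * vecNormSq e ≤ φ) :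
    vecNormSq ((e + d) + (β:ℂ) • (e - e'))
      ≤ ((1 + 3*β + β^2) + (α^2 - 2*α - α*β)*ρ) * vecNormSq e
        + (2*β^2 + (1+α)*β) * vecNormSq e' := by
  have ha : 0 ≤ vecNormSq e := vecNormSq_nonneg e
  have ha' : 0 ≤ vecNormSq e' := vecNormSq_nonneg e'
  have hφ0 : 0 ≤ φ := le_trans (mul_nonneg (le_of_lt hρ0) ha) hφ
  have hu : vecNormSq (e + d) = vecNormSq e - 2*(α*φ) + α^2*φ := by
    rw [vecNormSq_add, hed, hd]; ring
  have hLHS : vecNormSq ((e+d) + (β:ℂ) • (e - e'))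
      = vecNormSq (e+d) + 2*(β*((dotc (e+d) (e-e')).re)) + β^2*vecNormSq (e-e') := by
    rw [vecNormSq_add, re_dotc_csmul_real, vecNormSq_csmul]
    have : ‖((β:ℂ))‖^2 = β^2 := by
      rw [Complex.norm_real]
      exact sq_abs β
    rw [this]
  have hde : (dotc d e).re = -(α*φ) := by rw [re_dotc_comm]; exact hed
  have hcross : (dotc (e+d) (e-e')).re
      = vecNormSq e - (dotc e e').re - α*φ - (dotc d e').re := by
    rw [dotc_add_left, dotc_sub_right, dotc_sub_right]
    simp only [Complex.add_re, Complex.sub_re]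
    rw [re_dotc_self, hde]
    ring
  have hsub : vecNormSq (e-e') = vecNormSq e - 2*(dotc e e').re + vecNormSq e' :=
    vecNormSq_sub e e'
  have hq1 : 0 ≤ vecNormSq (e+d) + 2*((dotc e e').re + (dotc d e').re) + vecNormSq e' := by
    have h0 := vecNormSq_nonneg ((e+d) + e')
    rw [vecNormSq_add, dotc_add_left, Complex.add_re] at h0
    linarith
  have hq2 : 0 ≤ vecNormSq e + 2*(dotc e e').re + vecNormSq e' := by
    have h0 := vecNormSq_nonneg (e + e')
    rw [vecNormSq_add] at h0
    linarith
  rw [hLHS, hcross, hsub, hu]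
  nlinarith [mul_nonneg (le_of_lt hβ0) hq1,
    mul_nonneg (mul_nonneg (le_of_lt hβ0) (le_of_lt hβ0)) hq2,
    mul_nonneg (mul_nonneg (by linarith : (0:ℝ) ≤ 1+β) (by nlinarith : (0:ℝ) ≤ 2*α - α^2))
      (by linarith : (0:ℝ) ≤ φ - ρ*vecNormSq e),
    mul_nonneg (mul_nonneg (le_of_lt hα0) (le_of_lt hβ0))
      (by linarith : (0:ℝ) ≤ φ - ρ*vecNormSq e),
    mul_nonneg (mul_nonneg (le_of_lt hβ0) (by linarith : (0:ℝ) ≤ α*(3-α)*ρ - β)) ha,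
    mul_nonneg (mul_nonneg (le_of_lt hα0) (le_of_lt hβ0)) ha']

set_option maxHeartbeats 1000000 in
lemma arith_facts (α ρ β τ1 τ2 γ1 γ2 p q : ℝ)
    (hα0 : 0 < α) (hα2 : α < 2) (hρ0 : 0 < ρ) (hρ1 : ρ ≤ 1)
    (hτ1 : τ1 = 4 + α - α * ρ) (hτ2 : τ2 = α * (2 - α) * ρ)
    (hβ0 : 0 < β) (hβ : β < (Real.sqrt (τ1 ^ 2 + 12 * τ2) - τ1) / 6)
    (hγ1 : γ1 = (1 + 3 * β + β ^ 2) + (α ^ 2 - 2 * α - α * β) * ρ)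
    (hγ2 : γ2 = 2 * β ^ 2 + (1 + α) * β)
    (hp : p = (Real.sqrt (γ1 ^ 2 + 4 * γ2) - γ1) / 2)
    (hq : q = (Real.sqrt (γ1 ^ 2 + 4 * γ2) + γ1) / 2) :
    0 < γ2 ∧ 0 ≤ p ∧ 0 < q ∧ q < 1 ∧ γ1 + p = q ∧ p * q = γ2 ∧ β ≤ α * (3 - α) * ρ := by
  have hτ1ge : 4 ≤ τ1 := by
    have h := mul_le_of_le_one_right (le_of_lt hα0) hρ1
    rw [hτ1]; linarith
  have hτ2pos : 0 < τ2 := by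
    rw [hτ2]; exact mul_pos (mul_pos hα0 (by linarith)) hρ0
  have hDτ : 0 ≤ τ1^2 + 12*τ2 := by nlinarith
  have h1 : 6*β + τ1 < Real.sqrt (τ1^2 + 12*τ2) := by linarith
  have h2 : (6*β + τ1)^2 < τ1^2 + 12*τ2 := by
    have hs := Real.sq_sqrt hDτ
    nlinarith [h1, Real.sqrt_nonneg (τ1^2 + 12*τ2)]
  have hkey : 3*β^2 + τ1*β < τ2 := by nlinarith
  have h4β : 4*β < τ2 :=  by
    linarith [hkey, sq_nonneg β, mul_nonneg (show (0:ℝ) ≤ τ1 - 4 by linarith) (le_of_lt hβ0)]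
  have hτ2le : τ2 ≤ 2*(α*ρ) := by
    rw [hτ2]
    nlinarith [mul_nonneg (mul_nonneg (le_of_lt hα0) (le_of_lt hα0)) (le_of_lt hρ0)]
  have hβle : β ≤ α * (3 - α) * ρ := by
    have h5 : 0 ≤ (2-α)*α*ρ :=
      mul_nonneg (mul_nonneg (by linarith) (le_of_lt hα0)) (le_of_lt hρ0)
    nlinarith
  have hγ2pos : 0 < γ2 := by
    rw [hγ2]
    have h6 : 0 < (1+α)*β := mul_pos (by linarith) hβ0
    nlinarith [sq_nonneg β]
  have hsum : γ1 + γ2 < 1 := by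
    rw [hγ1, hγ2]
    rw [hτ1, hτ2] at hkey
    linarith [hkey]
  have hγ1lt : γ1 < 1 := by linarith
  have hD : 0 < γ1^2 + 4*γ2 := by nlinarith [sq_nonneg γ1]
  have hsD : Real.sqrt (γ1^2 + 4*γ2) ^ 2 = γ1^2 + 4*γ2 := Real.sq_sqrt (le_of_lt hD)
  have habs : |γ1| < Real.sqrt (γ1^2 + 4*γ2) := by
    rw [← Real.sqrt_sq_eq_abs]
    exact Real.sqrt_lt_sqrt (sq_nonneg γ1) (by linarith)
  have hsqlt : Real.sqrt (γ1^2 + 4*γ2) < 2 - γ1 := by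
    rw [show (2:ℝ) - γ1 = Real.sqrt ((2-γ1)^2) from (Real.sqrt_sq (by linarith)).symm]
    exact Real.sqrt_lt_sqrt (le_of_lt hD) (by nlinarith)
  have hsge : γ1 ≤ Real.sqrt (γ1^2 + 4*γ2) := le_trans (le_abs_self γ1) (le_of_lt habs)
  refine ⟨hγ2pos, ?_, ?_, ?_, ?_, ?_, hβle⟩
  · rw [hp]; linarith
  · rw [hq]
    have := neg_abs_le γ1
    linarith
  · rw [hq]; linarith
  · rw [hp, hq]; ring
  · rw [hp, hq]
    have h7 : ((Real.sqrt (γ1^2+4*γ2) - γ1)/2) * ((Real.sqrt (γ1^2+4*γ2) + γ1)/2)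
        = (Real.sqrt (γ1^2+4*γ2)^2 - γ1^2)/4 := by ring
    rw [show γ1 ^ 2 + 4 * γ2 = γ1^2 + 4*γ2 from rfl, h7, hsD]
    ring

lemma rec_bound (a : ℕ → ℝ) (γ1 γ2 p q : ℝ) (ha : ∀ k, 0 ≤ a k)
    (ha01 : a 0 = a 1)
    (hrec : ∀ k, 1 ≤ k → a (k+1) ≤ γ1 * a k + γ2 * a (k-1))
    (hp0 : 0 ≤ p) (hq0 : 0 < q) (hγ1p : γ1 + p = q) (hpq : p * q = γ2) :
    ∀ k, a (k+1) ≤ q^k * (1+p) * a 0 := by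
  have key : ∀ k, a (k+1) + p * a k ≤ q^k * (1+p) * a 0 := by
    intro k
    induction k with
    | zero =>
      have h0 : a 1 = a 0 := ha01.symm
      rw [h0]
      nlinarith [ha 0]
    | succ k ih =>
      have h1 : a (k+2) ≤ γ1 * a (k+1) + γ2 * a k := by
        have h := hrec (k+1) (Nat.le_add_left 1 k)
        simpa using h
      have h2 : a (k+2) + p * a (k+1) ≤ q * (a (k+1) + p * a k) := by
        calc a (k+2) + p * a (k+1) ≤ γ1 * a (k+1) + γ2 * a k + p * a (k+1) := by linarith
          _ = (γ1 + p) * a (k+1) + γ2 * a k := by ring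
          _ = q * (a (k+1) + p * a k) := by rw [hγ1p, ← hpq]; ring
      calc a (k+2) + p * a (k+1) ≤ q * (a (k+1) + p * a k) := h2
        _ ≤ q * (q^k * (1+p) * a 0) := mul_le_mul_of_nonneg_left ih (le_of_lt hq0)
        _ = q^(k+1) * (1+p) * a 0 := by ring
  intro k
  have h := key k
  nlinarith [mul_nonneg hp0 (ha k)]

lemma dotc_neg_left {k : ℕ} (u v : Fin k → ℂ) : dotc (-u) v = -dotc u v := by
  simp [dotc]

lemma main_case {m n : ℕ} (A : Matrix (Fin m) (Fin n) ℂ) (b : Fin m → ℂ)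
    (hA : ∀ i, A i ≠ 0) (xs : Fin n → ℂ) (hxs1 : A.mulVec xs = b)
    (xk xk' xn : Fin n → ℂ)
    (α β ρ γ1 γ2 : ℝ)
    (hα0 : 0 < α) (hα2 : α < 2) (hβ0 : 0 < β) (hρ0 : 0 < ρ) (hβle : β ≤ α*(3-α)*ρ)
    (hγ1 : γ1 = (1 + 3*β + β^2) + (α^2 - 2*α - α*β)*ρ) (hγ2 : γ2 = 2*β^2 + (1+α)*β)
    (hres : b - A.mulVec xk ≠ 0)
    (hρb : ρ ≤ ((1 / 2) * (frobSq A / frobSq (rowSub A (Uhat A b xk))) + 1 / 2) *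
            (frobSq (rowSub A (Ugreedy A b xk)) / frobSq A) *
            (sigmaRSq A / sigma1Sq (rowSub A (Ugreedy A b xk))))
    (hrange : ∃ y, xk - xs = Aᴴ.mulVec y)
    (hitk : xn = xk + ((α : ℂ) * (dotc (eta A b xk) (b - A.mulVec xk) /
            (vecNormSq (Aᴴ.mulVec (eta A b xk)) : ℂ))) • Aᴴ.mulVec (eta A b xk)
            + (β : ℂ) • (xk - xk')) :
    vecNormSq (xn - xs) ≤ γ1 * vecNormSq (xk - xs) + γ2 * vecNormSq (xk' - xs) := by
  obtain ⟨hs, hG, hdotc, hφineq⟩ := residual_facts A b hA xs hxs1 xk hres ρ hρ0 hρb hrange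
  set η := eta A b xk with hηdef
  set s := vecNormSq η with hsdef
  set G := vecNormSq (Aᴴ.mulVec η) with hGdef
  rw [hdotc] at hitk
  set d : Fin n → ℂ := ((α:ℂ) * (((s:ℝ):ℂ)/((G:ℝ):ℂ))) • (Aᴴ.mulVec η) with hddef
  have hstep : xn - xs = ((xk - xs) + d) + (β:ℂ) • ((xk - xs) - (xk' - xs)) := by
    rw [hitk, hddef]
    funext i
    simp only [Pi.add_apply, Pi.sub_apply, Pi.smul_apply, smul_eq_mul]
    ring
  have hAe : A.mulVec (xk - xs) = -(b - A.mulVec xk) := by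
    rw [Matrix.mulVec_sub, hxs1]
    funext i
    simp only [Pi.sub_apply, Pi.neg_apply]
    ring
  have hdotc_eg : dotc (xk - xs) (Aᴴ.mulVec η) = -(((s:ℝ)):ℂ) := by
    rw [dotc_adjoint', hAe, dotc_neg_left, dotc_conj, hdotc, Complex.conj_ofReal]
  have hed : (dotc (xk - xs) d).re = -(α * (s^2/G)) := by
    rw [hddef, dotc_smul_right, hdotc_eg]
    have hc : ((α:ℂ) * (((s:ℝ):ℂ)/((G:ℝ):ℂ))) * (-((s:ℝ):ℂ)) = ((-(α * (s^2/G)) : ℝ) : ℂ) := by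
      push_cast
      ring
    rw [hc, Complex.ofReal_re]
  have hdsq : vecNormSq d = α^2 * (s^2/G) := by
    rw [hddef, vecNormSq_csmul]
    have hz : ((α:ℂ) * (((s:ℝ):ℂ)/((G:ℝ):ℂ))) = ((α*(s/G) : ℝ) : ℂ) := by
      push_cast
      ring
    rw [hz, show ‖((α*(s/G):ℝ):ℂ)‖^2 = (α*(s/G))^2 from by rw [Complex.norm_real]; exact sq_abs _,
      ← hGdef]
    have hGne : G ≠ 0 := ne_of_gt hG
    field_simp
  have hφρ : ρ * vecNormSq (xk - xs) ≤ s^2/G := (le_div_iff₀ hG).mpr hφineq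
  rw [hstep, hγ1, hγ2]
  exact step_bound (xk - xs) (xk' - xs) d α β ρ (s^2/G) hα0 hα2 hβ0 hρ0 hβle hed hdsq hφρ

end

/-- mFDBK convergence: with `α ∈ (0,2)`, `ρ ∈ (0,1]`, `τ₁ = 4 + α − αρ`,
`τ₂ = α(2−α)ρ`, and `0 < β < (√(τ₁² + 12τ₂) − τ₁)/6`, if the mFDBK iterates satisfy
`ρ̂_k ≥ ρ` whenever `k ≥ 1` and `b − Ax^k ≠ 0`, where
`ρ̂_k = ((1/2)‖A‖_F²/‖A_{Û(x^k),:}‖_F² + 1/2)·(‖A_{U(x^k),:}‖_F²/‖A‖_F²)·(σ_r(A)²/σ₁(A_{U(x^k),:})²)`,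
then with `γ₁ = (1+3β+β²) + (α²−2α−αβ)ρ`, `γ₂ = 2β² + (1+α)β`, `p = (√(γ₁²+4γ₂) − γ₁)/2` and
`q = (√(γ₁²+4γ₂) + γ₁)/2`, one has `q < 1` and
`‖x^{k+1} − x_*‖₂² ≤ q^k (1+p) ‖x⁰ − x_*‖₂²` for every `k ≥ 0`. -/
theorem stmt8 {m n : ℕ} (A : Matrix (Fin m) (Fin n) ℂ) (b : Fin m → ℂ)
    (hA : ∀ i, A i ≠ 0)
    (xs : Fin n → ℂ) (hxs1 : A.mulVec xs = b) (hxs2 : ∃ y, xs = Aᴴ.mulVec y)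
    (α ρ β τ1 τ2 γ1 γ2 p q : ℝ)
    (hα0 : 0 < α) (hα2 : α < 2) (hρ0 : 0 < ρ) (hρ1 : ρ ≤ 1)
    (hτ1 : τ1 = 4 + α - α * ρ) (hτ2 : τ2 = α * (2 - α) * ρ)
    (hβ0 : 0 < β) (hβ : β < (Real.sqrt (τ1 ^ 2 + 12 * τ2) - τ1) / 6)
    (x : ℕ → Fin n → ℂ)
    (hx01 : x 0 = x 1) (hx0 : ∃ y, x 0 = Aᴴ.mulVec y)
    (hit : ∀ k, 1 ≤ k →
      x (k + 1) = x k
        + ((α : ℂ) * (dotc (eta A b (x k)) (b - A.mulVec (x k)) /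
            (vecNormSq (Aᴴ.mulVec (eta A b (x k))) : ℂ))) • Aᴴ.mulVec (eta A b (x k))
        + (β : ℂ) • (x k - x (k - 1)))
    (hρbound : ∀ k, 1 ≤ k → b - A.mulVec (x k) ≠ 0 →
      ρ ≤ ((1 / 2) * (frobSq A / frobSq (rowSub A (Uhat A b (x k)))) + 1 / 2) *
            (frobSq (rowSub A (Ugreedy A b (x k))) / frobSq A) *
            (sigmaRSq A / sigma1Sq (rowSub A (Ugreedy A b (x k)))))
    (hγ1 : γ1 = (1 + 3 * β + β ^ 2) + (α ^ 2 - 2 * α - α * β) * ρ)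
    (hγ2 : γ2 = 2 * β ^ 2 + (1 + α) * β)
    (hp : p = (Real.sqrt (γ1 ^ 2 + 4 * γ2) - γ1) / 2)
    (hq : q = (Real.sqrt (γ1 ^ 2 + 4 * γ2) + γ1) / 2) :
    q < 1 ∧ ∀ k, vecNormSq (x (k + 1) - xs) ≤ q ^ k * (1 + p) * vecNormSq (x 0 - xs) := by
  classical
  have H : ∀ k, (∃ y, x k = Aᴴ.mulVec y) ∧ (∃ y, x (k+1) = Aᴴ.mulVec y) := by
    intro k
    induction k with
    | zero => exact ⟨hx0, by rw [← hx01]; exact hx0⟩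
    | succ k ih =>
      refine ⟨ih.2, ?_⟩
      obtain ⟨y1, h1⟩ := ih.2
      obtain ⟨y0, h0⟩ := ih.1
      rw [hit (k+1) (Nat.le_add_left 1 k)]
      refine ⟨y1 + ((α : ℂ) * (dotc (eta A b (x (k+1))) (b - A.mulVec (x (k+1))) /
          (vecNormSq (Aᴴ.mulVec (eta A b (x (k+1)))) : ℂ))) • (eta A b (x (k+1)))
          + (β:ℂ) • (y1 - y0), ?_⟩
      simp only [Nat.add_sub_cancel]
      rw [Matrix.mulVec_add, Matrix.mulVec_add, Matrix.mulVec_smul, Matrix.mulVec_smul,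
        Matrix.mulVec_sub, ← h1, ← h0]
  have herange : ∀ k, ∃ y, x k - xs = Aᴴ.mulVec y := by
    intro k
    obtain ⟨y1, h1⟩ := (H k).1
    obtain ⟨y2, h2⟩ := hxs2
    exact ⟨y1 - y2, by rw [h1, h2, Matrix.mulVec_sub]⟩
  obtain ⟨hγ2pos, hp0, hq0, hq1, hγ1p, hpq, hβle⟩ :=
    arith_facts α ρ β τ1 τ2 γ1 γ2 p q hα0 hα2 hρ0 hρ1 hτ1 hτ2 hβ0 hβ hγ1 hγ2 hp hq
  refine ⟨hq1, ?_⟩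
  have hrec : ∀ k, 1 ≤ k → vecNormSq (x (k+1) - xs)
      ≤ γ1 * vecNormSq (x k - xs) + γ2 * vecNormSq (x (k-1) - xs) := by
    intro k hk
    by_cases hres : b - A.mulVec (x k) = 0
    · -- zero residual: x k = xs
      have hxkxs : x k = xs := by
        obtain ⟨y, hy⟩ := herange k
        have hAe : A.mulVec (x k - xs) = 0 := by
          rw [Matrix.mulVec_sub, hxs1]
          funext i
          have := congrFun hres i
          simp only [Pi.sub_apply, Pi.zero_apply] at this ⊢
          linear_combination -this
        have h0 : vecNormSq (x k - xs) = 0 := by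
          have h1 : dotc (x k - xs) (x k - xs) = 0 := by
            conv_lhs => rw [hy]
            rw [dotc_adjoint, ← hy, hAe, dotc_zero_right]
          rw [← re_dotc_self, h1]
          rfl
        exact sub_eq_zero.mp ((vecNormSq_eq_zero_iff _).mp h0)
      have hη0 : eta A b (x k) = 0 := by
        funext i
        rw [eta]
        split
        · exact congrFun hres i
        · rfl
      have hx1 : x (k+1) = x k + (β:ℂ) • (x k - x (k-1)) := by
        rw [hit k hk, hη0]
        simp [dotc_zero_left, Matrix.mulVec_zero]
      have hdiff : x (k+1) - xs = (β:ℂ) • (xs - x (k-1)) := by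
        rw [hx1, hxkxs]
        funext i
        simp only [Pi.add_apply, Pi.sub_apply, Pi.smul_apply, smul_eq_mul]
        ring
      rw [hdiff, vecNormSq_csmul, hxkxs, sub_self,
        show xs - x (k-1) = -(x (k-1) - xs) from (neg_sub _ _).symm, vecNormSq_neg,
        show ‖((β:ℝ):ℂ)‖^2 = β^2 from by rw [Complex.norm_real]; exact sq_abs β]
      have h00 : vecNormSq (0 : Fin n → ℂ) = 0 := by simp [vecNormSq]
      rw [h00, mul_zero, zero_add]
      have hβγ2 : β^2 ≤ γ2 := by
        rw [hγ2]
        nlinarith [sq_nonneg β, mul_pos (show (0:ℝ) < 1+α by linarith) hβ0]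
      exact mul_le_mul_of_nonneg_right hβγ2 (vecNormSq_nonneg _)
    · exact main_case A b hA xs hxs1 (x k) (x (k-1)) (x (k+1)) α β ρ γ1 γ2
        hα0 hα2 hβ0 hρ0 hβle hγ1 hγ2 hres (hρbound k hk hres) (herange k) (hit k hk)
  exact rec_bound (fun j => vecNormSq (x j - xs)) γ1 γ2 p q
    (fun j => vecNormSq_nonneg _)
    (by show vecNormSq (x 0 - xs) = vecNormSq (x 1 - xs); rw [hx01]) hrec hp0 hq0 hγ1p hpq
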